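/- Let n ≥ 1 be an integer, x₀ ∈ ℝ, and let f : ℝ → [0,∞) be measurable with ∫_{x₀}^∞ f(t) dt < ∞. Then for every x ≥ x₀, J_n(x) := ∫_{[0,∞)^{2n}} ∏_{j=1}^{2n−1} f(x+t_j+t_{j+1}) · f(x+t_{2n}) dt₁ ⋯ dt_{2n} ≤ (∫_{x₀}^∞ f(t) dt)^{2n}. -/
import Mathlib


open MeasureTheory ENNReal

/-- `J_n(x) = ∫_{[0,∞)^{2n}} ∏_{j=1}^{2n−1} f(x+t_j+t_{j+1}) · f(x+t_{2n}) dt`. -/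
noncomputable def chainJ (f : ℝ → ℝ) (n : ℕ) (hn : 1 ≤ n) (x : ℝ) : ℝ≥0∞ :=
  ∫⁻ t in {t : Fin (2 * n) → ℝ | ∀ i, 0 ≤ t i},
    (∏ j : Fin (2 * n - 1),
      ENNReal.ofReal (f (x + t ⟨j.1, by have := j.isLt; omega⟩
        + t ⟨j.1 + 1, by have := j.isLt; omega⟩))) *
    ENNReal.ofReal (f (x + t ⟨2 * n - 1, by omega⟩))

private lemma restrict_eq_pi (m : ℕ) :
    (volume : Measure (Fin m → ℝ)).restrict {t : Fin m → ℝ | ∀ i, 0 ≤ t i} =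
      Measure.pi fun _ : Fin m => (volume : Measure ℝ).restrict (Set.Ici 0) := by
  refine (Measure.pi_eq fun s hs => ?_).symm
  rw [Measure.restrict_apply (MeasurableSet.univ_pi hs)]
  have hset : Set.pi Set.univ s ∩ {t : Fin m → ℝ | ∀ i, 0 ≤ t i}
      = Set.pi Set.univ (fun i => s i ∩ Set.Ici 0) := by
    ext t; simp [Set.mem_pi, forall_and]
  rw [hset, volume_pi_pi]
  exact Finset.prod_congr rfl fun i _ => (Measure.restrict_apply (hs i)).symm

private lemma shift_bound (x₀ x : ℝ) (hx : x₀ ≤ x) (f : ℝ → ℝ) (hf : Measurable f)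
    (hf0 : ∀ t, 0 ≤ f t) (hint : IntegrableOn f (Set.Ioi x₀)) (c : ℝ) (hc : 0 ≤ c) :
    (∫⁻ a in Set.Ici (0:ℝ), ENNReal.ofReal (f (x + a + c)))
      ≤ ENNReal.ofReal (∫ t in Set.Ioi x₀, f t) := by
  have h1 : ∀ a : ℝ, x + a + c = a + (x + c) := fun a => by ring
  simp_rw [h1]
  have hmp := measurePreserving_add_right (volume : Measure ℝ) (x + c)
  have hpre : Set.Ici (0:ℝ) = (fun a : ℝ => a + (x + c)) ⁻¹' Set.Ici (x + c) := by
    ext a; simp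
  have hF : Measurable fun u : ℝ => ENNReal.ofReal (f u) :=
    ENNReal.measurable_ofReal.comp hf
  calc (∫⁻ a in Set.Ici (0:ℝ), ENNReal.ofReal (f (a + (x + c))))
      = ∫⁻ u in Set.Ici (x + c), ENNReal.ofReal (f u) := by
        rw [hpre]
        exact hmp.setLIntegral_comp_preimage measurableSet_Ici hF
    _ ≤ ∫⁻ u in Set.Ici x₀, ENNReal.ofReal (f u) :=
        lintegral_mono_set (Set.Ici_subset_Ici.2 (by linarith))
    _ = ∫⁻ u in Set.Ioi x₀, ENNReal.ofReal (f u) := by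
        rw [restrict_Ioi_eq_restrict_Ici]
    _ = ENNReal.ofReal (∫ t in Set.Ioi x₀, f t) :=
        (ofReal_integral_eq_lintegral_ofReal hint
          (Filter.Eventually.of_forall fun t => hf0 t)).symm

private lemma chain_aux (x₀ x : ℝ) (hx : x₀ ≤ x) (f : ℝ → ℝ) (hf : Measurable f)
    (hf0 : ∀ t, 0 ≤ f t) (hint : IntegrableOn f (Set.Ioi x₀)) :
    ∀ k : ℕ,
      (∫⁻ t, (∏ j : Fin k, ENNReal.ofReal (f (x + t j.castSucc + t j.succ))) *
          ENNReal.ofReal (f (x + t (Fin.last k)))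
        ∂(Measure.pi fun _ : Fin (k+1) => (volume : Measure ℝ).restrict (Set.Ici 0))) ≤
      (ENNReal.ofReal (∫ t in Set.Ioi x₀, f t)) ^ (k+1) := by
  set I : ℝ≥0∞ := ENNReal.ofReal (∫ t in Set.Ioi x₀, f t) with hI
  set μ0 : Measure ℝ := (volume : Measure ℝ).restrict (Set.Ici 0) with hμ0
  intro k
  induction k with
  | zero =>
      simp only [Finset.univ_eq_empty, Finset.prod_empty, one_mul, zero_add, pow_one]
      have h := (measurePreserving_funUnique μ0 (Fin 1)).lintegral_map_equiv
        (fun a : ℝ => ENNReal.ofReal (f (x + a)))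
      calc (∫⁻ t, ENNReal.ofReal (f (x + t (Fin.last 0)))
              ∂(Measure.pi fun _ : Fin 1 => μ0))
          = ∫⁻ a, ENNReal.ofReal (f (x + a)) ∂μ0 := h.symm
        _ ≤ I := by
            have := shift_bound x₀ x hx f hf hf0 hint 0 le_rfl
            simpa using this
  | succ k ih =>
      set C : (Fin (k+1) → ℝ) → ℝ≥0∞ := fun s =>
        (∏ j : Fin k, ENNReal.ofReal (f (x + s j.castSucc + s j.succ))) *
          ENNReal.ofReal (f (x + s (Fin.last k))) with hC
      have hFab : ∀ {m : ℕ} (a b : Fin m),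
          Measurable fun t : Fin m → ℝ => ENNReal.ofReal (f (x + t a + t b)) := by
        intro m a b
        exact ENNReal.measurable_ofReal.comp (hf.comp
          (((measurable_const.add (measurable_pi_apply a)).add (measurable_pi_apply b))))
      have hFa : ∀ {m : ℕ} (a : Fin m),
          Measurable fun t : Fin m → ℝ => ENNReal.ofReal (f (x + t a)) := by
        intro m a
        exact ENNReal.measurable_ofReal.comp (hf.comp
          ((measurable_const.add (measurable_pi_apply a))))
      set G : (Fin (k+2) → ℝ) → ℝ≥0∞ := fun t =>
        (∏ j : Fin (k+1), ENNReal.ofReal (f (x + t j.castSucc + t j.succ))) *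
          ENNReal.ofReal (f (x + t (Fin.last (k+1)))) with hG
      have hGm : Measurable G := by
        apply Measurable.mul
        · exact Finset.measurable_prod _ fun j _ => hFab _ _
        · exact hFa _
      set e := MeasurableEquiv.piFinSuccAbove (fun _ : Fin (k+2) => ℝ) 0 with he
      have hmp := measurePreserving_piFinSuccAbove (fun _ : Fin (k+2) => μ0) 0
      have key : ∀ (a : ℝ) (s : Fin (k+1) → ℝ),
          G (e.symm (a, s)) = ENNReal.ofReal (f (x + a + s 0)) * C s := by
        intro a s
        have ht : ∀ j : Fin (k+1), e.symm (a, s) j.succ = s j := by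
          intro j
          have h' : e.symm (a, s) ((0 : Fin (k+2)).succAbove j) = s j := by
            simp [he, MeasurableEquiv.piFinSuccAbove_symm_apply]
          simpa [Fin.succAbove_zero] using h'
        have ht0 : e.symm (a, s) 0 = a := by
          simp [he, MeasurableEquiv.piFinSuccAbove_symm_apply]
        simp only [hG, hC]
        rw [Fin.prod_univ_succ]
        have h1 : e.symm (a, s) ((0 : Fin (k+1)).castSucc) = a := by
          rw [Fin.castSucc_zero]; exact ht0
        have h2 : e.symm (a, s) ((0 : Fin (k+1)).succ) = s 0 := ht 0
        have h3 : ∀ j : Fin k, e.symm (a, s) (j.succ.castSucc) = s j.castSucc := by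
          intro j; rw [← Fin.succ_castSucc]; exact ht j.castSucc
        have h4 : ∀ j : Fin k, e.symm (a, s) (j.succ.succ) = s j.succ := fun j => ht j.succ
        have h5 : e.symm (a, s) (Fin.last (k+1)) = s (Fin.last k) := by
          rw [← Fin.succ_last]; exact ht (Fin.last k)
        rw [h1, h2, h5]
        have hprod : (∏ j : Fin k,
            ENNReal.ofReal (f (x + e.symm (a, s) j.succ.castSucc + e.symm (a, s) j.succ.succ)))
            = ∏ j : Fin k, ENNReal.ofReal (f (x + s j.castSucc + s j.succ)) :=
          Finset.prod_congr rfl fun j _ => by rw [h3 j, h4 j]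
        rw [hprod]; ring
      have hae : ∀ᵐ s ∂(Measure.pi fun _ : Fin (k+1) => μ0), 0 ≤ s 0 := by
        rw [ae_iff]
        have hset : {s : Fin (k+1) → ℝ | ¬ 0 ≤ s 0}
            = Function.eval 0 ⁻¹' Set.Iio (0:ℝ) := by
          ext s; simp [not_le]
        rw [hset]
        refine Measure.pi_eval_preimage_null _ ?_
        rw [hμ0, Measure.restrict_apply measurableSet_Iio]
        simp [Set.Iio_inter_Ici]
      have hCm : Measurable C := by
        apply Measurable.mul
        · exact Finset.measurable_prod _ fun j _ => hFab _ _
        · exact hFa _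
      calc (∫⁻ t, G t ∂(Measure.pi fun _ : Fin (k+2) => μ0))
          = ∫⁻ p, G (e.symm p) ∂(μ0.prod (Measure.pi fun _ : Fin (k+1) => μ0)) :=
            MeasurePreserving.lintegral_map_equiv G e.symm hmp.symm
        _ = ∫⁻ s, ∫⁻ a, G (e.symm (a, s)) ∂μ0
              ∂(Measure.pi fun _ : Fin (k+1) => μ0) :=
            lintegral_prod_symm _ ((hGm.comp e.symm.measurable).aemeasurable)
        _ = ∫⁻ s, (∫⁻ a, ENNReal.ofReal (f (x + a + s 0)) ∂μ0) * C s
              ∂(Measure.pi fun _ : Fin (k+1) => μ0) := by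
            refine lintegral_congr fun s => ?_
            simp_rw [key]
            exact lintegral_mul_const _ (ENNReal.measurable_ofReal.comp
              (hf.comp ((measurable_const.add measurable_id).add_const (s 0))))
        _ ≤ ∫⁻ s, I * C s ∂(Measure.pi fun _ : Fin (k+1) => μ0) := by
            refine lintegral_mono_ae (hae.mono fun s hs => ?_)
            exact mul_le_mul_left (shift_bound x₀ x hx f hf hf0 hint (s 0) hs) _
        _ = I * ∫⁻ s, C s ∂(Measure.pi fun _ : Fin (k+1) => μ0) :=
            lintegral_const_mul I hCm
        _ ≤ I * I ^ (k+1) := mul_le_mul_right ih I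
        _ = I ^ (k+2) := by ring

private lemma chain_aux_general (x₀ x : ℝ) (hx : x₀ ≤ x) (f : ℝ → ℝ) (hf : Measurable f)
    (hf0 : ∀ t, 0 ≤ f t) (hint : IntegrableOn f (Set.Ioi x₀)) :
    ∀ m : ℕ, (hm : 1 ≤ m) →
      (∫⁻ t, (∏ j : Fin (m - 1),
          ENNReal.ofReal (f (x + t ⟨j.1, by have := j.isLt; omega⟩
            + t ⟨j.1 + 1, by have := j.isLt; omega⟩))) *
          ENNReal.ofReal (f (x + t ⟨m - 1, by omega⟩))
        ∂(Measure.pi fun _ : Fin m => (volume : Measure ℝ).restrict (Set.Ici 0))) ≤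
      (ENNReal.ofReal (∫ t in Set.Ioi x₀, f t)) ^ m := by
  intro m hm
  obtain ⟨k, rfl⟩ : ∃ k, m = k + 1 := ⟨m - 1, by omega⟩
  exact chain_aux x₀ x hx f hf hf0 hint k

/-- If `f : ℝ → [0,∞)` is measurable with `∫_{x₀}^∞ f < ∞`, then
for every `x ≥ x₀` one has `J_n(x) ≤ (∫_{x₀}^∞ f)^{2n}`. -/
theorem chainJ_bound (n : ℕ) (hn : 1 ≤ n) (x₀ : ℝ) (f : ℝ → ℝ)
    (hf : Measurable f) (hf0 : ∀ t : ℝ, 0 ≤ f t)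
    (hint : IntegrableOn f (Set.Ioi x₀)) :
    ∀ x : ℝ, x₀ ≤ x →
      chainJ f n hn x ≤ ENNReal.ofReal ((∫ t in Set.Ioi x₀, f t) ^ (2 * n)) := by
  intro x hx
  unfold chainJ
  rw [restrict_eq_pi (2 * n)]
  rw [ENNReal.ofReal_pow (setIntegral_nonneg measurableSet_Ioi fun t _ => hf0 t)]
  exact chain_aux_general x₀ x hx f hf hf0 hint (2 * n) (by omega)
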